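/- Let P be a Young diagram of order n and Q ⊆ P. For each i ∈ {1,...,n}, let the bridge length b_i be the number of columns j with #^j Q = i−1 and #^j P = i. Then P/Q admits a semistandard {1,2}-filling (rows weakly increasing, columns strictly increasing) that is balanced (equal number of 1's and 2's) and α_1-codominant (for every j, among the first j columns the number of 2's is at least the number of 1's) if and only if: (i) #P − #Q is even; (ii) P/Q has thickness at most 2; and (iii) for every i, b_i ≤ (1/2)∑_{j=1}^n b_j. -/

import Mathlib

/-- A Young diagram of order `n`, given by its (weakly decreasing) row lengths,
vanishing from row `n` on. Rows are indexed from `0`. -/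
def IsYoung (n : ℕ) (P : ℕ → ℕ) : Prop :=
  (∀ i, P (i + 1) ≤ P i) ∧ ∀ i, n ≤ i → P i = 0

/-- The total number of boxes of a Young diagram of order `n`. -/
def ysize (n : ℕ) (P : ℕ → ℕ) : ℕ := ∑ i ∈ Finset.range n, P i

/-- The height of the `j`-th column (columns indexed from `0`). -/
def colH (n : ℕ) (P : ℕ → ℕ) (j : ℕ) : ℕ :=
  ((Finset.range n).filter (fun i => j < P i)).card

/-- The number of boxes of the skew diagram `P/Q`. -/
def skewSize (n : ℕ) (P Q : ℕ → ℕ) : ℕ := ∑ i ∈ Finset.range n, (P i - Q i)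

/-- The skew diagram `P/Q` has thickness at most `m`: every column has at most
`m` boxes. -/
def ThickLE (n : ℕ) (P Q : ℕ → ℕ) (m : ℕ) : Prop :=
  ∀ j, colH n P j ≤ colH n Q j + m

/-- `T` is a semistandard filling of the skew diagram `P/Q`: rows weakly increase
from left to right, columns strictly increase from top to bottom.
`T i j` is the entry in row `i`, column `j`. -/
def SkewSemistd (P Q : ℕ → ℕ) (T : ℕ → ℕ → ℕ) : Prop :=
  (∀ i j, Q i ≤ j → j + 1 < P i → T i j ≤ T i (j + 1)) ∧
  (∀ i j, Q i ≤ j → j < P (i + 1) → T i j < T (i + 1) j)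

/-- All entries of the filling `T` of `P/Q` belong to the alphabet `{lo, …, hi}`. -/
def InAlpha (P Q : ℕ → ℕ) (T : ℕ → ℕ → ℕ) (lo hi : ℕ) : Prop :=
  ∀ i j, Q i ≤ j → j < P i → lo ≤ T i j ∧ T i j ≤ hi

/-- The number of occurrences of the symbol `s` among the first `j` columns of the
filling `T` of `P/Q`. -/
def cntCols (n : ℕ) (P Q : ℕ → ℕ) (T : ℕ → ℕ → ℕ) (s : ℕ) (j : ℕ) : ℕ :=
  ∑ i ∈ Finset.range n, ((Finset.Ico (Q i) (min j (P i))).filter (fun c => T i c = s)).card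

/-- The total number of occurrences of the symbol `s` in the filling `T` of `P/Q`. -/
def cntAll (n : ℕ) (P Q : ℕ → ℕ) (T : ℕ → ℕ → ℕ) (s : ℕ) : ℕ :=
  ∑ i ∈ Finset.range n, ((Finset.Ico (Q i) (P i)).filter (fun c => T i c = s)).card

/-- The filling `T` of `P/Q` is balanced with respect to the alphabet `{lo, …, hi}`:
each symbol occurs exactly `(#P/Q)/(hi+1-lo)` times. -/
def BalancedF (n : ℕ) (P Q : ℕ → ℕ) (T : ℕ → ℕ → ℕ) (lo hi : ℕ) : Prop :=
  ∀ s, lo ≤ s → s ≤ hi → (hi + 1 - lo) * cntAll n P Q T s = skewSize n P Q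

/-- The filling `T` of `P/Q` is `α_i`-codominant: among the first `j` columns there
are at least as many occurrences of `i+1` as of `i`, for every `j`. -/
def Codom (n : ℕ) (P Q : ℕ → ℕ) (T : ℕ → ℕ → ℕ) (i : ℕ) : Prop :=
  ∀ j, cntCols n P Q T i j ≤ cntCols n P Q T (i + 1) j

/-- The length of the bridge at height `i` (for `1 ≤ i ≤ n`) of the skew diagram
`P/Q`: the number of columns whose height in `Q` is `i-1` and in `P` is `i`. -/
def bridge (n : ℕ) (P Q : ℕ → ℕ) (i : ℕ) : ℕ :=
  ((Finset.range (P 0)).filter (fun j => colH n Q j = i - 1 ∧ colH n P j = i)).card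

open Finset

lemma young_anti {n : ℕ} {P : ℕ → ℕ} (hP : IsYoung n P) : ∀ {a b : ℕ}, a ≤ b → P b ≤ P a :=
  fun {a b} h => (antitone_nat_of_succ_le hP.1) h

lemma downclosed_eq_range (S : Finset ℕ) (h : ∀ a b : ℕ, a ≤ b → b ∈ S → a ∈ S) :
    S = Finset.range S.card := by
  have key : ∀ x, x ∈ S ↔ x < S.card := by
    intro x
    constructor
    · intro hx
      have hsub : Finset.range (x + 1) ⊆ S := by
        intro a ha
        exact h a x (by simpa using Nat.lt_succ_iff.mp (mem_range.mp ha)) hx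
      have := Finset.card_le_card hsub
      simpa using this
    · intro hx
      by_contra hc
      have hsub : S ⊆ Finset.range x := by
        intro y hy
        simp only [mem_range]
        by_contra hy'
        push_neg at hy'
        exact hc (h x y hy' hy)
      have := Finset.card_le_card hsub
      simp at this
      omega
  ext x
  simp [key]

lemma colH_le (n : ℕ) (P : ℕ → ℕ) (j : ℕ) : colH n P j ≤ n := by
  have := Finset.card_filter_le (Finset.range n) (fun i => j < P i)
  simpa [colH] using this

lemma colH_anti (n : ℕ) (P : ℕ → ℕ) {j j' : ℕ} (h : j ≤ j') : colH n P j' ≤ colH n P j := by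
  apply Finset.card_le_card
  intro i hi
  simp only [mem_filter, mem_range] at hi ⊢
  omega

lemma colH_mono (n : ℕ) {P Q : ℕ → ℕ} (hQP : ∀ i, Q i ≤ P i) (j : ℕ) :
    colH n Q j ≤ colH n P j := by
  apply Finset.card_le_card
  intro i hi
  simp only [mem_filter, mem_range] at hi ⊢
  have := hQP i
  omega

lemma lt_colH_iff {n : ℕ} {P : ℕ → ℕ} (hP : IsYoung n P) (i j : ℕ) :
    i < colH n P j ↔ j < P i := by
  have hS : ((Finset.range n).filter (fun i => j < P i)) =
      Finset.range (colH n P j) := by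
    apply downclosed_eq_range
    intro a b hab hb
    simp only [mem_filter, mem_range] at hb ⊢
    exact ⟨by omega, lt_of_lt_of_le hb.2 (young_anti hP hab)⟩
  constructor
  · intro h
    have : i ∈ ((Finset.range n).filter (fun i => j < P i)) := by
      rw [hS]; simpa using h
    simpa using (mem_filter.mp this).2
  · intro h
    have hin : i < n := by
      by_contra hc
      rw [hP.2 i (by omega)] at h
      omega
    have : i ∈ ((Finset.range n).filter (fun i => j < P i)) := by
      simp [hin, h]
    rw [hS] at this
    simpa using this

lemma colH_le_iff {n : ℕ} {P : ℕ → ℕ} (hP : IsYoung n P) (i j : ℕ) :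
    colH n P j ≤ i ↔ P i ≤ j := by
  rw [← Nat.not_lt, ← Nat.not_lt, lt_colH_iff hP]

lemma colH_pos_lt {n : ℕ} {P : ℕ → ℕ} (hP : IsYoung n P) {j : ℕ} (h : 0 < colH n P j) :
    j < P 0 := by
  rw [lt_colH_iff hP] at h
  exact h

/-- number of `s`-entries in column `c` -/
def colCnt (n : ℕ) (P Q : ℕ → ℕ) (T : ℕ → ℕ → ℕ) (s c : ℕ) : ℕ :=
  ((Finset.Ico (colH n Q c) (colH n P c)).filter (fun i => T i c = s)).card

section Fubini

variable {n : ℕ} {P Q : ℕ → ℕ}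

lemma rows_of_col (hP : IsYoung n P) (hQ : IsYoung n Q) (T : ℕ → ℕ → ℕ) (s c : ℕ) :
    ((Finset.range n).filter (fun i => Q i ≤ c ∧ c < P i ∧ T i c = s)) =
    ((Finset.Ico (colH n Q c) (colH n P c)).filter (fun i => T i c = s)) := by
  ext i
  simp only [mem_filter, mem_range, mem_Ico]
  constructor
  · rintro ⟨hin, h1, h2, h3⟩
    refine ⟨⟨?_, ?_⟩, h3⟩
    · rw [← colH_le_iff hQ] at h1; exact h1
    · rw [← lt_colH_iff hP] at h2; exact h2
  · rintro ⟨⟨h1, h2⟩, h3⟩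
    have hc2 : c < P i := (lt_colH_iff hP i c).mp h2
    have hc1 : Q i ≤ c := (colH_le_iff hQ i c).mp h1
    have : i < n := lt_of_lt_of_le h2 (colH_le n P c)
    exact ⟨this, hc1, hc2, h3⟩

lemma cntCols_eq_sum (hP : IsYoung n P) (hQ : IsYoung n Q) (T : ℕ → ℕ → ℕ) (s J : ℕ) :
    cntCols n P Q T s J = ∑ c ∈ Finset.range J, colCnt n P Q T s c := by
  unfold cntCols colCnt
  have h1 : ∀ i ∈ Finset.range n,
      ((Finset.Ico (Q i) (min J (P i))).filter (fun c => T i c = s)).card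
      = ∑ c ∈ Finset.range J, if Q i ≤ c ∧ c < P i ∧ T i c = s then 1 else 0 := by
    intro i _
    rw [Finset.card_filter]
    have : Finset.Ico (Q i) (min J (P i)) =
        (Finset.range J).filter (fun c => Q i ≤ c ∧ c < P i) := by
      ext c
      simp only [mem_Ico, mem_filter, mem_range, lt_min_iff]
      omega
    rw [this, Finset.sum_filter]
    apply Finset.sum_congr rfl
    intro c _
    split_ifs <;> tauto
  rw [Finset.sum_congr rfl h1, Finset.sum_comm]
  apply Finset.sum_congr rfl
  intro c _
  rw [← rows_of_col hP hQ T s c, Finset.card_filter]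

lemma cntAll_eq (hP : IsYoung n P) (T : ℕ → ℕ → ℕ) (s : ℕ) :
    cntAll n P Q T s = cntCols n P Q T s (P 0) := by
  unfold cntAll cntCols
  apply Finset.sum_congr rfl
  intro i _
  rw [min_eq_right (young_anti hP (Nat.zero_le i))]

lemma skewSize_eq_sum (hP : IsYoung n P) (hQ : IsYoung n Q) :
    skewSize n P Q = ∑ c ∈ Finset.range (P 0), (colH n P c - colH n Q c) := by
  unfold skewSize
  have h1 : ∀ i ∈ Finset.range n,
      P i - Q i = ∑ c ∈ Finset.range (P 0), if Q i ≤ c ∧ c < P i then 1 else 0 := by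
    intro i _
    have hle : P i ≤ P 0 := young_anti hP (Nat.zero_le i)
    have : Finset.Ico (Q i) (P i) = (Finset.range (P 0)).filter (fun c => Q i ≤ c ∧ c < P i) := by
      ext c
      simp only [mem_Ico, mem_filter, mem_range]
      omega
    calc P i - Q i = (Finset.Ico (Q i) (P i)).card := by rw [Nat.card_Ico]
    _ = _ := by rw [this, Finset.card_filter]
  rw [Finset.sum_congr rfl h1, Finset.sum_comm]
  apply Finset.sum_congr rfl
  intro c _
  have : ((Finset.range n).filter (fun i => Q i ≤ c ∧ c < P i)) =
      Finset.Ico (colH n Q c) (colH n P c) := by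
    have := rows_of_col (Q := Q) hP hQ (fun _ _ => 0) 0 c
    simpa using this
  rw [← Nat.card_Ico, ← this, Finset.card_filter]

end Fubini

section Struct

variable {n : ℕ} {P Q : ℕ → ℕ} {T : ℕ → ℕ → ℕ}

lemma box_of_colH (hP : IsYoung n P) (hQ : IsYoung n Q) {i c : ℕ}
    (h1 : colH n Q c ≤ i) (h2 : i < colH n P c) : Q i ≤ c ∧ c < P i :=
  ⟨(colH_le_iff hQ i c).mp h1, (lt_colH_iff hP i c).mp h2⟩

lemma double_entries (hP : IsYoung n P) (hQ : IsYoung n Q) (hT : SkewSemistd P Q T)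
    (hA : InAlpha P Q T 1 2) {c : ℕ} (h : colH n P c = colH n Q c + 2) :
    T (colH n Q c) c = 1 ∧ T (colH n Q c + 1) c = 2 := by
  set a := colH n Q c with ha
  have hb1 : Q a ≤ c ∧ c < P a := box_of_colH hP hQ le_rfl (by omega)
  have hb2 : Q (a + 1) ≤ c ∧ c < P (a + 1) := box_of_colH hP hQ (by omega) (by omega)
  have hs : T a c < T (a + 1) c := hT.2 a c hb1.1 hb2.2
  have h1 := hA a c hb1.1 hb1.2
  have h2 := hA (a + 1) c hb2.1 hb2.2
  omega

lemma colCnt_classify (hP : IsYoung n P) (hQ : IsYoung n Q) (hQP : ∀ i, Q i ≤ P i)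
    (hth : ThickLE n P Q 2) (hT : SkewSemistd P Q T) (hA : InAlpha P Q T 1 2)
    {s : ℕ} (hs : s = 1 ∨ s = 2) (c : ℕ) :
    colCnt n P Q T s c = (if colH n P c = colH n Q c + 2 then 1 else 0) +
      (if colH n P c = colH n Q c + 1 ∧ T (colH n Q c) c = s then 1 else 0) := by
  have h0 : colH n Q c ≤ colH n P c := colH_mono n hQP c
  have h2 : colH n P c ≤ colH n Q c + 2 := hth c
  set a := colH n Q c with ha
  unfold colCnt
  rcases Nat.lt_or_ge (colH n P c) (a + 1) with hc | hc
  · -- empty column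
    have he : colH n P c = a := by omega
    rw [he]
    simp [Finset.Ico_self]
    intro x h1 h2
    omega
  rcases Nat.lt_or_ge (colH n P c) (a + 2) with hc2 | hc2
  · -- single column
    have he : colH n P c = a + 1 := by omega
    rw [he]
    have : Finset.Ico a (a + 1) = {a} := by
      ext x; simp [Finset.mem_Ico]
    rw [this, Finset.filter_singleton]
    by_cases hTa : T a c = s
    · simp [hTa]
    · simp [hTa]
  · -- double column
    have he : colH n P c = a + 2 := by omega
    obtain ⟨e1, e2⟩ := double_entries hP hQ hT hA
      (show colH n P c = colH n Q c + 2 by omega)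
    rw [he]
    have hico : Finset.Ico a (a + 2) = {a, a + 1} := by
      ext x; simp [Finset.mem_Ico, Finset.mem_insert]; omega
    rw [hico]
    rw [show ({a, a + 1} : Finset ℕ) = insert a {a + 1} by rfl]
    rw [Finset.filter_insert, Finset.filter_singleton]
    rw [← ha] at e1 e2
    rcases hs with hs | hs <;> subst hs <;>
      simp [← ha, e1, e2] <;> omega

def dcnt (n : ℕ) (P Q : ℕ → ℕ) (j : ℕ) : ℕ :=
  ((Finset.range j).filter (fun c => colH n P c = colH n Q c + 2)).card

def scnt (n : ℕ) (P Q : ℕ → ℕ) (T : ℕ → ℕ → ℕ) (s j : ℕ) : ℕ :=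
  ((Finset.range j).filter
    (fun c => colH n P c = colH n Q c + 1 ∧ T (colH n Q c) c = s)).card

lemma cntCols_decomp (hP : IsYoung n P) (hQ : IsYoung n Q) (hQP : ∀ i, Q i ≤ P i)
    (hth : ThickLE n P Q 2) (hT : SkewSemistd P Q T) (hA : InAlpha P Q T 1 2)
    {s : ℕ} (hs : s = 1 ∨ s = 2) (j : ℕ) :
    cntCols n P Q T s j = dcnt n P Q j + scnt n P Q T s j := by
  rw [cntCols_eq_sum hP hQ]
  unfold dcnt scnt
  rw [Finset.card_filter, Finset.card_filter, ← Finset.sum_add_distrib]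
  exact Finset.sum_congr rfl (fun c _ => colCnt_classify hP hQ hQP hth hT hA hs c)

def Sing (n : ℕ) (P Q : ℕ → ℕ) : Finset ℕ :=
  (Finset.range (P 0)).filter (fun c => colH n P c = colH n Q c + 1)

lemma bridge_eq_fiber (hi : 1 ≤ i) :
    bridge n P Q i = ((Sing n P Q).filter (fun c => colH n P c = i)).card := by
  unfold bridge Sing
  rw [Finset.filter_filter]
  congr 1
  ext c
  simp only [Finset.mem_filter, Finset.mem_range]
  constructor
  · rintro ⟨h0, h1, h2⟩; exact ⟨h0, by omega, by omega⟩
  · rintro ⟨h0, h1, h2⟩; exact ⟨h0, by omega, by omega⟩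

lemma fiber_card (X : Finset ℕ) (hX : X ⊆ Sing n P Q) :
    X.card = ∑ i ∈ Finset.Icc 1 n, (X.filter (fun c => colH n P c = i)).card := by
  apply Finset.card_eq_sum_card_fiberwise
  intro c hc
  have := hX hc
  simp only [Sing, Finset.mem_filter, Finset.mem_range] at this
  simp only [Finset.mem_coe, Finset.mem_Icc]
  have h1 := colH_le n P c
  omega

lemma sum_bridge_eq :
    ∑ i ∈ Finset.Icc 1 n, bridge n P Q i = (Sing n P Q).card := by
  rw [fiber_card (Sing n P Q) (le_refl _)]
  apply Finset.sum_congr rfl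
  intro i hi
  rw [bridge_eq_fiber (Finset.mem_Icc.mp hi).1]

lemma row_mono (hT : SkewSemistd P Q T) (i : ℕ) :
    ∀ d j, Q i ≤ j → j + d < P i → T i j ≤ T i (j + d) := by
  intro d
  induction d with
  | zero => intro j _ _; exact le_refl _
  | succ d ih =>
    intro j h1 h2
    have step : T i j ≤ T i (j + 1) := hT.1 i j h1 (by omega)
    have := ih (j + 1) (by omega) (by omega)
    calc T i j ≤ T i (j + 1) := step
    _ ≤ T i (j + 1 + d) := this
    _ = T i (j + (d + 1)) := by ring_nf

lemma row_mono' (hT : SkewSemistd P Q T) {i j j' : ℕ}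
    (h1 : Q i ≤ j) (h2 : j' < P i) (h3 : j ≤ j') : T i j ≤ T i j' := by
  have := row_mono hT i (j' - j) j h1 (by omega)
  rwa [show j + (j' - j) = j' by omega] at this

end Struct

section Forward

variable {n : ℕ} {P Q : ℕ → ℕ} {T : ℕ → ℕ → ℕ}

lemma thick_of_filling (hP : IsYoung n P) (hQ : IsYoung n Q)
    (hT : SkewSemistd P Q T) (hA : InAlpha P Q T 1 2) : ThickLE n P Q 2 := by
  intro j
  by_contra hc
  push_neg at hc
  set a := colH n Q j with ha
  have hb0 : Q a ≤ j ∧ j < P a := box_of_colH hP hQ le_rfl (by omega)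
  have hb1 : Q (a + 1) ≤ j ∧ j < P (a + 1) := box_of_colH hP hQ (by omega) (by omega)
  have hb2 : Q (a + 2) ≤ j ∧ j < P (a + 2) := box_of_colH hP hQ (by omega) (by omega)
  have s1 : T a j < T (a + 1) j := hT.2 a j hb0.1 hb1.2
  have s2 : T (a + 1) j < T (a + 2) j := hT.2 (a + 1) j hb1.1 hb2.2
  have A0 := hA a j hb0.1 hb0.2
  have A2 := hA (a + 2) j hb2.1 hb2.2
  omega

lemma cnt_sum_eq (hA : InAlpha P Q T 1 2) :
    cntAll n P Q T 1 + cntAll n P Q T 2 = skewSize n P Q := by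
  unfold cntAll skewSize
  rw [← Finset.sum_add_distrib]
  apply Finset.sum_congr rfl
  intro i _
  have hneg : (Finset.Ico (Q i) (P i)).filter (fun c => T i c = 2) =
      (Finset.Ico (Q i) (P i)).filter (fun c => ¬ T i c = 1) := by
    ext c
    simp only [Finset.mem_filter, Finset.mem_Ico]
    constructor
    · rintro ⟨⟨h1, h2⟩, h3⟩; exact ⟨⟨h1, h2⟩, by omega⟩
    · rintro ⟨⟨h1, h2⟩, h3⟩
      have := hA i c h1 h2
      exact ⟨⟨h1, h2⟩, by omega⟩
  rw [hneg, Finset.card_filter_add_card_filter_not, Nat.card_Ico]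

lemma even_of_filling (hA : InAlpha P Q T 1 2)
    (hbal : cntAll n P Q T 1 = cntAll n P Q T 2) : Even (skewSize n P Q) := by
  have := cnt_sum_eq (n := n) hA
  exact ⟨cntAll n P Q T 1, by omega⟩

lemma bridge_bound_of_filling (hP : IsYoung n P) (hQ : IsYoung n Q) (hQP : ∀ i, Q i ≤ P i)
    (hT : SkewSemistd P Q T) (hA : InAlpha P Q T 1 2)
    (hbal : cntAll n P Q T 1 = cntAll n P Q T 2) (hcod : Codom n P Q T 1)
    {i : ℕ} (hi1 : 1 ≤ i) (hin : i ≤ n) :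
    2 * bridge n P Q i ≤ ∑ j ∈ Finset.Icc 1 n, bridge n P Q j := by
  have hth : ThickLE n P Q 2 := thick_of_filling hP hQ hT hA
  set tot := P 0 with htot
  -- decomposition facts
  have hdec1 : ∀ j, cntCols n P Q T 1 j = dcnt n P Q j + scnt n P Q T 1 j :=
    fun j => cntCols_decomp hP hQ hQP hth hT hA (Or.inl rfl) j
  have hdec2 : ∀ j, cntCols n P Q T 2 j = dcnt n P Q j + scnt n P Q T 2 j :=
    fun j => cntCols_decomp hP hQ hQP hth hT hA (Or.inr rfl) j
  have hcodS : ∀ j, scnt n P Q T 1 j ≤ scnt n P Q T 2 j := by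
    intro j
    have := hcod j
    rw [hdec1 j, hdec2 j] at this
    omega
  have htotS : scnt n P Q T 1 tot = scnt n P Q T 2 tot := by
    have h1 := cntAll_eq (n := n) (Q := Q) hP T 1
    have h2 := cntAll_eq (n := n) (Q := Q) hP T 2
    rw [h1, h2, hdec1, hdec2] at hbal
    rw [htot]
    omega
  set B := (Sing n P Q).filter (fun c => colH n P c = i) with hB
  rw [bridge_eq_fiber hi1, sum_bridge_eq, ← hB]
  have hBS : B ⊆ Sing n P Q := Finset.filter_subset _ _
  have hBfact : ∀ c ∈ B, c < tot ∧ colH n Q c = i - 1 ∧ colH n P c = i := by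
    intro c hc
    simp only [hB, Sing, Finset.mem_filter, Finset.mem_range] at hc
    exact ⟨hc.1.1, by omega, hc.2⟩
  have hbox : ∀ c ∈ B, Q (i - 1) ≤ c ∧ c < P (i - 1) := by
    intro c hc
    obtain ⟨_, hq, hp⟩ := hBfact c hc
    exact box_of_colH hP hQ (by omega) (by omega)
  have hmono2 : ∀ c ∈ B, ∀ c' ∈ B, c ≤ c' → T (i - 1) c ≤ T (i - 1) c' :=
    fun c hc c' hc' hle => row_mono' hT (hbox c hc).1 (hbox c' hc').2 hle
  have hTalpha : ∀ c ∈ B, 1 ≤ T (i - 1) c ∧ T (i - 1) c ≤ 2 := by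
    intro c hc
    exact hA (i - 1) c (hbox c hc).1 (hbox c hc).2
  set A := B.filter (fun c => T (i - 1) c = 1) with hAdef
  set C := B.filter (fun c => T (i - 1) c = 2) with hCdef
  have hACB : A.card + C.card = B.card := by
    rw [hAdef, hCdef]
    have : B.filter (fun c => T (i - 1) c = 2) = B.filter (fun c => ¬ T (i - 1) c = 1) := by
      ext c
      simp only [Finset.mem_filter]
      constructor
      · rintro ⟨h1, h2⟩; exact ⟨h1, by omega⟩
      · rintro ⟨h1, h2⟩
        have := hTalpha c h1
        exact ⟨h1, by omega⟩
    rw [this, Finset.card_filter_add_card_filter_not]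
  -- scnt monotonicity
  have hscnt_mono : ∀ s, ∀ j j' : ℕ, j ≤ j' → scnt n P Q T s j ≤ scnt n P Q T s j' := by
    intro s j j' h
    apply Finset.card_le_card
    intro c hc
    simp only [scnt, Finset.mem_filter, Finset.mem_range] at hc ⊢
    exact ⟨by omega, hc.2⟩
  have hsdB : (Sing n P Q \ B).card = (Sing n P Q).card - B.card :=
    Finset.card_sdiff_of_subset hBS
  have hBle : B.card ≤ (Sing n P Q).card := Finset.card_le_card hBS
  -- construction of the left witness set X
  have hXex : ∀ (hAne : A.Nonempty), ∃ X : Finset ℕ, X ⊆ Sing n P Q ∧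
      (∀ c ∈ X, c ∉ B) ∧ (∀ c ∈ X, c ≤ A.max' hAne) ∧ A.card ≤ X.card := by
    intro hAne
    set j0 := A.max' hAne with hj0
    have hj0A : j0 ∈ A := A.max'_mem hAne
    have hj0B : j0 ∈ B := (Finset.filter_subset _ _) hj0A
    have hj0T : T (i - 1) j0 = 1 := (Finset.mem_filter.mp hj0A).2
    refine ⟨(Finset.range (j0 + 1)).filter
      (fun c => colH n P c = colH n Q c + 1 ∧ T (colH n Q c) c = 2), ?_, ?_, ?_, ?_⟩
    · intro c hc
      simp only [Finset.mem_filter, Finset.mem_range] at hc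
      simp only [Sing, Finset.mem_filter, Finset.mem_range]
      exact ⟨colH_pos_lt hP (by omega), hc.2.1⟩
    · intro c hc hcB
      simp only [Finset.mem_filter, Finset.mem_range] at hc
      have hq : colH n Q c = i - 1 := (hBfact c hcB).2.1
      rw [hq] at hc
      have := hmono2 c hcB j0 hj0B (by omega)
      omega
    · intro c hc
      simp only [Finset.mem_filter, Finset.mem_range] at hc
      omega
    · have hsub : A ⊆ (Finset.range (j0 + 1)).filter
          (fun c => colH n P c = colH n Q c + 1 ∧ T (colH n Q c) c = 1) := by
        intro c hc
        have hcB : c ∈ B := (Finset.filter_subset _ _) hc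
        have hfac := hBfact c hcB
        simp only [Finset.mem_filter, Finset.mem_range]
        refine ⟨?_, by omega, ?_⟩
        · have := A.le_max' c hc
          omega
        · rw [hfac.2.1]
          exact (Finset.mem_filter.mp hc).2
      have h1 : A.card ≤ scnt n P Q T 1 (j0 + 1) := Finset.card_le_card hsub
      exact h1.trans (hcodS (j0 + 1))
  -- construction of the right witness set Y
  have hYex : ∀ (hCne : C.Nonempty), ∃ Y : Finset ℕ, Y ⊆ Sing n P Q ∧
      (∀ c ∈ Y, c ∉ B) ∧ (∀ c ∈ Y, C.min' hCne ≤ c) ∧ C.card ≤ Y.card := by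
    intro hCne
    set j1 := C.min' hCne with hj1
    have hj1C : j1 ∈ C := C.min'_mem hCne
    have hj1B : j1 ∈ B := (Finset.filter_subset _ _) hj1C
    have hj1T : T (i - 1) j1 = 2 := (Finset.mem_filter.mp hj1C).2
    have hj1tot : j1 < tot := (hBfact j1 hj1B).1
    set pred1 : ℕ → Prop :=
      fun c => colH n P c = colH n Q c + 1 ∧ T (colH n Q c) c = 1 with hpred1
    set pred2 : ℕ → Prop :=
      fun c => colH n P c = colH n Q c + 1 ∧ T (colH n Q c) c = 2 with hpred2
    have hsub1 : (Finset.range j1).filter pred1 ⊆ (Finset.range tot).filter pred1 :=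
      Finset.filter_subset_filter _ (Finset.range_subset_range.mpr (by omega))
    have hsub2 : (Finset.range j1).filter pred2 ⊆ (Finset.range tot).filter pred2 :=
      Finset.filter_subset_filter _ (Finset.range_subset_range.mpr (by omega))
    refine ⟨(Finset.range tot).filter pred1 \ (Finset.range j1).filter pred1,
      ?_, ?_, ?_, ?_⟩
    · intro c hc
      have hc' := (Finset.mem_sdiff.mp hc).1
      simp only [Finset.mem_filter, Finset.mem_range, hpred1] at hc'
      simp only [Sing, Finset.mem_filter, Finset.mem_range]
      exact ⟨hc'.1, hc'.2.1⟩
    · intro c hc hcB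
      rw [Finset.mem_sdiff] at hc
      have hc1 := hc.1
      simp only [Finset.mem_filter, Finset.mem_range, hpred1] at hc1
      have hq : colH n Q c = i - 1 := (hBfact c hcB).2.1
      have hcge : j1 ≤ c := by
        by_contra hlt
        exact hc.2 (by
          simp only [Finset.mem_filter, Finset.mem_range, hpred1]
          exact ⟨by omega, hc1.2⟩)
      have hmle := hmono2 j1 hj1B c hcB hcge
      have hTc : T (i - 1) c = 1 := by rw [← hq]; exact hc1.2.2
      omega
    · intro c hc
      rw [Finset.mem_sdiff] at hc
      by_contra hlt
      push_neg at hlt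
      refine hc.2 ?_
      have hc1 := hc.1
      simp only [Finset.mem_filter, Finset.mem_range, hpred1] at hc1 ⊢
      exact ⟨by omega, hc1.2⟩
    · -- C.card ≤ Y.card
      have hCsub : C ⊆ (Finset.range tot).filter pred2 \ (Finset.range j1).filter pred2 := by
        intro c hc
        have hcB : c ∈ B := (Finset.filter_subset _ _) hc
        have hfac := hBfact c hcB
        rw [Finset.mem_sdiff]
        constructor
        · simp only [Finset.mem_filter, Finset.mem_range, hpred2]
          refine ⟨hfac.1, by omega, ?_⟩
          rw [hfac.2.1]
          exact (Finset.mem_filter.mp hc).2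
        · simp only [Finset.mem_filter, Finset.mem_range, hpred2]
          push_neg
          intro hlt
          exact absurd (C.min'_le c hc) (by omega)
      have h2 : C.card ≤ scnt n P Q T 2 tot - scnt n P Q T 2 j1 := by
        have := Finset.card_le_card hCsub
        rwa [Finset.card_sdiff_of_subset hsub2] at this
      have h3 : scnt n P Q T 2 tot - scnt n P Q T 2 j1 ≤
          scnt n P Q T 1 tot - scnt n P Q T 1 j1 := by
        have m1 := hscnt_mono 1 j1 tot (by omega)
        have m2 := hscnt_mono 2 j1 tot (by omega)
        have := hcodS j1
        omega
      have h4 : ((Finset.range tot).filter pred1 \ (Finset.range j1).filter pred1).card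
          = scnt n P Q T 1 tot - scnt n P Q T 1 j1 := Finset.card_sdiff_of_subset hsub1
      omega
  -- main case analysis
  rcases Finset.eq_empty_or_nonempty A with hAe | hAne
  · rcases Finset.eq_empty_or_nonempty C with hCe | hCne
    · have : B.card = 0 := by
        rw [hAe, hCe] at hACB; simpa using hACB.symm
      omega
    · obtain ⟨Y, hYS, hYB, _, hCY⟩ := hYex hCne
      have hYsub : Y ⊆ Sing n P Q \ B := by
        intro c hc
        rw [Finset.mem_sdiff]
        exact ⟨hYS hc, hYB c hc⟩
      have := Finset.card_le_card hYsub
      have hAe0 : A.card = 0 := by rw [hAe]; rfl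
      omega
  · rcases Finset.eq_empty_or_nonempty C with hCe | hCne
    · obtain ⟨X, hXS, hXB, _, hAX⟩ := hXex hAne
      have hXsub : X ⊆ Sing n P Q \ B := by
        intro c hc
        rw [Finset.mem_sdiff]
        exact ⟨hXS hc, hXB c hc⟩
      have := Finset.card_le_card hXsub
      have hCe0 : C.card = 0 := by rw [hCe]; rfl
      omega
    · obtain ⟨X, hXS, hXB, hXle, hAX⟩ := hXex hAne
      obtain ⟨Y, hYS, hYB, hYge, hCY⟩ := hYex hCne
      have hlt : A.max' hAne < C.min' hCne := by
        have hj0A : A.max' hAne ∈ A := A.max'_mem hAne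
        have hj1C : C.min' hCne ∈ C := C.min'_mem hCne
        have hj0B : A.max' hAne ∈ B := (Finset.filter_subset _ _) hj0A
        have hj1B : C.min' hCne ∈ B := (Finset.filter_subset _ _) hj1C
        have hT0 : T (i - 1) (A.max' hAne) = 1 := (Finset.mem_filter.mp hj0A).2
        have hT1 : T (i - 1) (C.min' hCne) = 2 := (Finset.mem_filter.mp hj1C).2
        by_contra hge
        push_neg at hge
        have := hmono2 _ hj1B _ hj0B hge
        omega
      have hdisj : Disjoint X Y := by
        rw [Finset.disjoint_left]
        intro c hcX hcY
        have := hXle c hcX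
        have := hYge c hcY
        omega
      have hunion : X ∪ Y ⊆ Sing n P Q \ B := by
        intro c hc
        rw [Finset.mem_sdiff]
        rcases Finset.mem_union.mp hc with h | h
        · exact ⟨hXS h, hXB c h⟩
        · exact ⟨hYS h, hYB c h⟩
      have hcard : X.card + Y.card = (X ∪ Y).card := (Finset.card_union_of_disjoint hdisj).symm
      have := Finset.card_le_card hunion
      omega

end Forward

section Backward

open Finset

lemma lpos_count (F : Finset ℕ) (a : ℕ) :
    (F.filter (fun x => ((F.filter (fun y => y < x)).card < a))).card = min F.card a := by
  induction F using Finset.induction_on_max with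
  | empty => simp
  | insert x S hmax ih =>
    have hxS : x ∉ S := fun h => lt_irrefl x (hmax x h)
    have f1 : ∀ y ∈ S, ((insert x S).filter (fun z => z < y)) = S.filter (fun z => z < y) := by
      intro y hy
      rw [Finset.filter_insert, if_neg]
      intro hxy
      exact absurd (hmax y hy) (by omega)
    have f2 : ((insert x S).filter (fun z => z < x)) = S := by
      rw [Finset.filter_insert, if_neg (lt_irrefl x)]
      exact Finset.filter_true_of_mem hmax
    have hout : (insert x S).filter
        (fun y => (((insert x S).filter (fun z => z < y)).card < a)) =
        if S.card < a then insert x (S.filter (fun y => ((S.filter (fun z => z < y)).card < a)))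
        else S.filter (fun y => ((S.filter (fun z => z < y)).card < a)) := by
      rw [Finset.filter_insert]
      have hcond : (((insert x S).filter (fun z => z < x)).card < a) ↔ S.card < a := by
        rw [f2]
      have hSpart : S.filter (fun y => (((insert x S).filter (fun z => z < y)).card < a)) =
          S.filter (fun y => ((S.filter (fun z => z < y)).card < a)) := by
        apply Finset.filter_congr
        intro y hy
        rw [f1 y hy]
      by_cases h : S.card < a
      · rw [if_pos (hcond.mpr h), if_pos h, hSpart]
      · rw [if_neg (fun hh => h (hcond.mp hh)), if_neg h, hSpart]
    rw [hout]
    have hxnot : x ∉ S.filter (fun y => ((S.filter (fun z => z < y)).card < a)) :=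
      fun h => hxS (Finset.filter_subset _ _ h)
    rw [Finset.card_insert_of_notMem hxS]
    by_cases h : S.card < a
    · rw [if_pos h, Finset.card_insert_of_notMem hxnot, ih]
      omega
    · rw [if_neg h, ih]
      omega

lemma Zlemma (b : ℕ → ℕ) (m : ℕ) (K : ℕ) :
    ∑ k ∈ Finset.range K, min (b k) (m - ∑ k' ∈ Finset.range k, b k')
      = min (∑ k ∈ Finset.range K, b k) m := by
  induction K with
  | zero => simp
  | succ K ih =>
    rw [Finset.sum_range_succ, ih, Finset.sum_range_succ (f := b)]
    omega

lemma sum_sub_distrib (K : ℕ) (f g : ℕ → ℕ) (h : ∀ k, k < K → g k ≤ f k) :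
    ∑ k ∈ Finset.range K, (f k - g k) = ∑ k ∈ Finset.range K, f k - ∑ k ∈ Finset.range K, g k := by
  have h1 : ∑ k ∈ Finset.range K, (f k - g k) + ∑ k ∈ Finset.range K, g k
      = ∑ k ∈ Finset.range K, f k := by
    rw [← Finset.sum_add_distrib]
    apply Finset.sum_congr rfl
    intro k hk
    have := h k (Finset.mem_range.mp hk)
    omega
  omega

lemma abstract_codom (m N : ℕ) (b u : ℕ → ℕ)
    (hub : ∀ k, u k ≤ b k)
    (hbm : ∀ k, k < N → b k ≤ m)
    (htot : ∑ k ∈ Finset.range N, b k ≤ 2 * m)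
    (hord : ∀ k k', k < k' → k' < N → 0 < u k' → u k = b k) :
    ∑ k ∈ Finset.range N, min (u k) (b k - min (b k) (m - ∑ k' ∈ Finset.range k, b k'))
      ≤ ∑ k ∈ Finset.range N,
          (u k - (b k - min (b k) (m - ∑ k' ∈ Finset.range k, b k'))) := by
  set L : ℕ → ℕ := fun k => ∑ k' ∈ Finset.range k, b k' with hL
  set z : ℕ → ℕ := fun k => min (b k) (m - L k) with hz
  set a : ℕ → ℕ := fun k => b k - z k with ha
  have hzb : ∀ k, z k ≤ b k := fun k => min_le_left _ _
  have hab : ∀ k, a k ≤ b k := fun k => Nat.sub_le _ _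
  have hZsum : ∀ K, ∑ k ∈ Finset.range K, z k = min (L K) m := fun K => Zlemma b m K
  have hAsum : ∀ K, ∑ k ∈ Finset.range K, a k = L K - min (L K) m := by
    intro K
    rw [ha]
    simp only
    rw [sum_sub_distrib K b z (fun k _ => hzb k), hZsum]
  by_cases hex : ∃ k, k < N ∧ u k < b k
  · set k0 := Nat.find hex with hk0
    obtain ⟨hk0N, hk0u⟩ := Nat.find_spec hex
    rw [← hk0] at hk0N hk0u
    have hbefore : ∀ k, k < k0 → u k = b k := by
      intro k hk
      have hmin := Nat.find_min hex (by omega : k < Nat.find hex)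
      push_neg at hmin
      have h2 := hub k
      have hkN : k < N := by omega
      have := hmin hkN
      omega
    have hafter : ∀ k, k0 < k → k < N → u k = 0 := by
      intro k hk1 hk2
      by_contra hc
      have := hord k0 k hk1 hk2 (by omega)
      omega
    have hsplit : ∀ f : ℕ → ℕ, ∑ k ∈ Finset.range N, f k
        = ∑ k ∈ Finset.range k0, f k + f k0 + ∑ k ∈ Finset.Ico (k0 + 1) N, f k := by
      intro f
      rw [← Finset.sum_range_succ]
      exact (Finset.sum_range_add_sum_Ico f (by omega)).symm
    rw [hsplit, hsplit]
    have htail1 : ∑ k ∈ Finset.Ico (k0 + 1) N, min (u k) (a k) = 0 := by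
      apply Finset.sum_eq_zero
      intro k hk
      rw [Finset.mem_Ico] at hk
      rw [hafter k hk.1 hk.2]
      simp
    have htail2 : ∑ k ∈ Finset.Ico (k0 + 1) N, (u k - a k) = 0 := by
      apply Finset.sum_eq_zero
      intro k hk
      rw [Finset.mem_Ico] at hk
      rw [hafter k hk.1 hk.2]
      simp
    have hhead1 : ∑ k ∈ Finset.range k0, min (u k) (a k) = ∑ k ∈ Finset.range k0, a k := by
      apply Finset.sum_congr rfl
      intro k hk
      rw [hbefore k (Finset.mem_range.mp hk)]
      exact min_eq_right (hab k)
    have hhead2 : ∑ k ∈ Finset.range k0, (u k - a k) = ∑ k ∈ Finset.range k0, z k := by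
      apply Finset.sum_congr rfl
      intro k hk
      rw [hbefore k (Finset.mem_range.mp hk)]
      have := hzb k
      simp only [ha]
      omega
    rw [htail1, htail2, hhead1, hhead2, hAsum, hZsum]
    have hLb : L k0 + b k0 ≤ 2 * m := by
      have : L (k0 + 1) ≤ L N := by
        apply Finset.sum_le_sum_of_subset
        exact Finset.range_subset_range.mpr (by omega)
      have hL1 : L (k0 + 1) = L k0 + b k0 := Finset.sum_range_succ b k0
      have : L N ≤ 2 * m := htot
      omega
    have hbk0m : b k0 ≤ m := hbm k0 hk0N
    have huk0 : u k0 ≤ b k0 := hub k0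
    have he1 : a k0 = b k0 - min (b k0) (m - ∑ k' ∈ Finset.range k0, b k') := rfl
    have he2 : L k0 = ∑ k' ∈ Finset.range k0, b k' := rfl
    omega
  · push_neg at hex
    have hall : ∀ k, k < N → u k = b k := by
      intro k hk
      have := hex k hk
      have := hub k
      omega
    have h1 : ∑ k ∈ Finset.range N, min (u k) (a k) = ∑ k ∈ Finset.range N, a k := by
      apply Finset.sum_congr rfl
      intro k hk
      rw [hall k (Finset.mem_range.mp hk)]
      exact min_eq_right (hab k)
    have h2 : ∑ k ∈ Finset.range N, (u k - a k) = ∑ k ∈ Finset.range N, z k := by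
      apply Finset.sum_congr rfl
      intro k hk
      rw [hall k (Finset.mem_range.mp hk)]
      have := hzb k
      simp only [ha]
      omega
    rw [h1, h2, hAsum, hZsum]
    have hLN : L N = ∑ k ∈ Finset.range N, b k := rfl
    omega

lemma sum_Icc_rev (g : ℕ → ℕ) (n : ℕ) :
    ∀ k, k ≤ n → ∑ i ∈ Finset.Icc (n - k + 1) n, g i = ∑ k' ∈ Finset.range k, g (n - k') := by
  intro k
  induction k with
  | zero => intro _; simp
  | succ k ih =>
    intro hk
    have hk' : k ≤ n := by omega
    have hins : Finset.Icc (n - (k + 1) + 1) n = insert (n - k) (Finset.Icc (n - k + 1) n) := by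
      ext x
      simp only [Finset.mem_Icc, Finset.mem_insert]
      omega
    rw [hins, Finset.sum_insert (by simp only [Finset.mem_Icc]; omega),
      ih hk', Finset.sum_range_succ]
    omega

end Backward

section Construction

def mhalf (n : ℕ) (P Q : ℕ → ℕ) : ℕ := (Sing n P Q).card / 2

def Lsum (n : ℕ) (P Q : ℕ → ℕ) (i : ℕ) : ℕ := ∑ i' ∈ Finset.Icc (i + 1) n, bridge n P Q i'

def zof (n : ℕ) (P Q : ℕ → ℕ) (i : ℕ) : ℕ :=
  min (bridge n P Q i) (mhalf n P Q - Lsum n P Q i)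

def aof (n : ℕ) (P Q : ℕ → ℕ) (i : ℕ) : ℕ := bridge n P Q i - zof n P Q i

def Bof (n : ℕ) (P Q : ℕ → ℕ) (i : ℕ) : Finset ℕ :=
  (Sing n P Q).filter (fun c => colH n P c = i)

def lpos (n : ℕ) (P Q : ℕ → ℕ) (c : ℕ) : ℕ :=
  ((Bof n P Q (colH n P c)).filter (fun x => x < c)).card

def Tfill (n : ℕ) (P Q : ℕ → ℕ) : ℕ → ℕ → ℕ := fun i c =>
  if colH n P c = colH n Q c + 2 then (if i = colH n Q c then 1 else 2)
  else if lpos n P Q c < aof n P Q (colH n P c) then 1 else 2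

variable {n : ℕ} {P Q : ℕ → ℕ}

lemma Tfill_vals (i c : ℕ) : Tfill n P Q i c = 1 ∨ Tfill n P Q i c = 2 := by
  unfold Tfill
  split_ifs <;> simp

lemma Tfill_alpha : InAlpha P Q (Tfill n P Q) 1 2 := by
  intro i c _ _
  rcases Tfill_vals (n := n) (P := P) (Q := Q) i c with h | h <;> rw [h] <;> omega

lemma mem_Bof {i c : ℕ} (hP : IsYoung n P) :
    c ∈ Bof n P Q i ↔ (colH n P c = colH n Q c + 1 ∧ colH n P c = i) := by
  unfold Bof Sing
  simp only [Finset.mem_filter, Finset.mem_range]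
  constructor
  · rintro ⟨⟨h0, h1⟩, h2⟩; exact ⟨h1, h2⟩
  · rintro ⟨h1, h2⟩
    exact ⟨⟨colH_pos_lt hP (by omega), h1⟩, h2⟩

lemma bridge_eq_Bof {i : ℕ} (hi : 1 ≤ i) : bridge n P Q i = (Bof n P Q i).card :=
  bridge_eq_fiber hi

lemma Tfill_semistd (hP : IsYoung n P) (hQ : IsYoung n Q) (hQP : ∀ i, Q i ≤ P i)
    (hth : ThickLE n P Q 2) : SkewSemistd P Q (Tfill n P Q) := by
  constructor
  · -- rows weakly increase
    intro i j h1 h2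
    have hqj : colH n Q j ≤ i := by
      rw [colH_le_iff hQ]; exact h1
    have hpj : i < colH n P j := by
      rw [lt_colH_iff hP]; omega
    have hqj1 : colH n Q (j + 1) ≤ i := by
      rw [colH_le_iff hQ]; omega
    have hpj1 : i < colH n P (j + 1) := by
      rw [lt_colH_iff hP]; omega
    have haP : colH n P (j + 1) ≤ colH n P j := colH_anti n P (by omega)
    have haQ : colH n Q (j + 1) ≤ colH n Q j := colH_anti n Q (by omega)
    have hthj := hth j
    have hthj1 := hth (j + 1)
    have hmQP := colH_mono n hQP j
    have hmQP1 := colH_mono n hQP (j + 1)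
    -- it suffices to show: left entry 2 → right entry 2
    have key : Tfill n P Q i j = 2 → Tfill n P Q i (j + 1) = 2 := by
      intro h2e
      by_cases hdj : colH n P j = colH n Q j + 2
      · -- left column is a double column
        have hiq : i = colH n Q j + 1 := by
          by_contra hne
          unfold Tfill at h2e
          rw [if_pos hdj] at h2e
          have : i = colH n Q j := by omega
          rw [if_pos this] at h2e
          omega
        have hp1 : colH n P (j + 1) = i + 1 := by omega
        have hq1 : colH n Q (j + 1) = i - 1 := by omega
        have hd1 : colH n P (j + 1) = colH n Q (j + 1) + 2 := by omega
        unfold Tfill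
        rw [if_pos hd1, if_neg (by omega)]
      · -- left column is a single column
        have hsj : colH n P j = colH n Q j + 1 := by omega
        have hiq : i = colH n Q j := by omega
        have hlj : ¬ (lpos n P Q j < aof n P Q (colH n P j)) := by
          intro hcon
          unfold Tfill at h2e
          rw [if_neg hdj, if_pos hcon] at h2e
          omega
        have hp1 : colH n P (j + 1) = i + 1 := by omega
        rcases (by omega : colH n Q (j + 1) = i ∨ (colH n Q (j + 1) + 1 = i ∧ 1 ≤ i)) with
          hq1 | ⟨hq1, hi1⟩
        · -- same bridge
          have hs1 : colH n P (j + 1) = colH n Q (j + 1) + 1 := by omega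
          have hpp : colH n P (j + 1) = colH n P j := by omega
          have hjB : j ∈ Bof n P Q (colH n P j) := by
            rw [mem_Bof hP]; exact ⟨hsj, rfl⟩
          have hsub : insert j ((Bof n P Q (colH n P j)).filter (fun x => x < j)) ⊆
              (Bof n P Q (colH n P j)).filter (fun x => x < j + 1) := by
            intro x hx
            rcases Finset.mem_insert.mp hx with hx | hx
            · subst hx
              exact Finset.mem_filter.mpr ⟨hjB, by omega⟩
            · rw [Finset.mem_filter] at hx ⊢
              exact ⟨hx.1, by omega⟩
          have hcard : lpos n P Q j + 1 ≤ lpos n P Q (j + 1) := by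
            have h1c := Finset.card_le_card hsub
            rw [Finset.card_insert_of_notMem (by
              intro hmem
              rw [Finset.mem_filter] at hmem
              omega)] at h1c
            unfold lpos
            rw [hpp]
            exact h1c
          unfold Tfill
          rw [if_neg (by omega), if_neg (by rw [hpp]; omega)]
        · -- right column is a double column
          have hd1 : colH n P (j + 1) = colH n Q (j + 1) + 2 := by omega
          unfold Tfill
          rw [if_pos hd1, if_neg (by omega)]
    rcases Tfill_vals (n := n) (P := P) (Q := Q) i j with h | h
    · rcases Tfill_vals (n := n) (P := P) (Q := Q) i (j + 1) with h' | h' <;> omega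
    · rw [key h]; omega
  · -- columns strictly increase
    intro i j h1 h2
    have hq : colH n Q j ≤ i := by rw [colH_le_iff hQ]; exact h1
    have hp : i + 1 < colH n P j := by rw [lt_colH_iff hP]; exact h2
    have hth' := hth j
    have hd : colH n P j = colH n Q j + 2 := by omega
    have hiq : i = colH n Q j := by omega
    unfold Tfill
    rw [if_pos hd, if_pos hiq, if_pos hd, if_neg (by omega)]
    omega

end Construction

section Count

variable {n : ℕ} {P Q : ℕ → ℕ}

def uof (n : ℕ) (P Q : ℕ → ℕ) (i j : ℕ) : ℕ := ((Bof n P Q i).filter (fun c => c < j)).card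

lemma Bof_zero (hP : IsYoung n P) : Bof n P Q 0 = ∅ := by
  ext c
  rw [mem_Bof hP]
  simp only [Finset.notMem_empty, iff_false]
  omega

lemma Bof_ord (hP : IsYoung n P) {i i' c c' : ℕ} (hii : i' < i)
    (hc : c ∈ Bof n P Q i) (hc' : c' ∈ Bof n P Q i') : c < c' := by
  rw [mem_Bof hP] at hc hc'
  by_contra hle
  push_neg at hle
  have := colH_anti n P hle
  omega

lemma Bof_lt_tot (hP : IsYoung n P) {i c : ℕ} (hc : c ∈ Bof n P Q i) : c < P 0 := by
  rw [mem_Bof hP] at hc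
  exact colH_pos_lt hP (by omega)

lemma filter_Bof_eq {i j c : ℕ} (hcj : c < j) :
    (Bof n P Q i).filter (fun x => x < c) =
    ((Bof n P Q i).filter (fun x => x < j)).filter (fun x => x < c) := by
  rw [Finset.filter_filter]
  apply Finset.filter_congr
  intro x _
  constructor
  · intro h; exact ⟨by omega, h⟩
  · intro h; exact h.2

lemma scnt_Tfill_fiber (hP : IsYoung n P) (i j : ℕ) (hi : i ∈ Finset.Icc 1 n) :
    ∀ s, s = 1 ∨ s = 2 →
    (((Finset.range j).filter (fun c => colH n P c = colH n Q c + 1 ∧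
        Tfill n P Q (colH n Q c) c = s)).filter (fun c => colH n P c = i)).card
      = if s = 1 then min (uof n P Q i j) (aof n P Q i)
        else uof n P Q i j - min (uof n P Q i j) (aof n P Q i) := by
  set F := (Bof n P Q i).filter (fun c => c < j) with hF
  have hmemF : ∀ c, c ∈ F ↔ (colH n P c = colH n Q c + 1 ∧ colH n P c = i ∧ c < j) := by
    intro c
    rw [hF, Finset.mem_filter, mem_Bof hP]
    tauto
  have hentry : ∀ c ∈ F, (Tfill n P Q (colH n Q c) c = 1 ↔
      ((F.filter (fun y => y < c)).card < aof n P Q i)) := by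
    intro c hc
    rw [hmemF] at hc
    obtain ⟨hs, hpi, hcj⟩ := hc
    have hnd : ¬ (colH n P c = colH n Q c + 2) := by omega
    have hlp : lpos n P Q c = (F.filter (fun y => y < c)).card := by
      unfold lpos
      rw [hpi, filter_Bof_eq hcj]
    unfold Tfill
    rw [if_neg hnd, hlp, hpi]
    by_cases hcon : (F.filter (fun y => y < c)).card < aof n P Q i
    · rw [if_pos hcon]; simp [hcon]
    · rw [if_neg hcon]; simp [hcon]
  intro s hs
  have hseteq : ∀ (b : Prop) [Decidable b], True := fun _ => trivial
  rcases hs with hs | hs <;> subst hs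
  · rw [if_pos rfl]
    have : (((Finset.range j).filter (fun c => colH n P c = colH n Q c + 1 ∧
        Tfill n P Q (colH n Q c) c = 1)).filter (fun c => colH n P c = i)) =
        F.filter (fun x => ((F.filter (fun y => y < x)).card < aof n P Q i)) := by
      ext c
      simp only [Finset.mem_filter, Finset.mem_range]
      constructor
      · rintro ⟨⟨hcj, hsing, hT⟩, hpi⟩
        have hcF : c ∈ F := (hmemF c).mpr ⟨hsing, hpi, hcj⟩
        exact ⟨hcF, (hentry c hcF).mp hT⟩
      · rintro ⟨hcF, hpred⟩
        have := (hmemF c).mp hcF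
        exact ⟨⟨this.2.2, this.1, (hentry c hcF).mpr hpred⟩, this.2.1⟩
    rw [this, lpos_count]
    rfl
  · rw [if_neg (by omega)]
    have : (((Finset.range j).filter (fun c => colH n P c = colH n Q c + 1 ∧
        Tfill n P Q (colH n Q c) c = 2)).filter (fun c => colH n P c = i)) =
        F.filter (fun x => ¬ ((F.filter (fun y => y < x)).card < aof n P Q i)) := by
      ext c
      simp only [Finset.mem_filter, Finset.mem_range]
      constructor
      · rintro ⟨⟨hcj, hsing, hT⟩, hpi⟩
        have hcF : c ∈ F := (hmemF c).mpr ⟨hsing, hpi, hcj⟩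
        refine ⟨hcF, fun hcon => ?_⟩
        have := (hentry c hcF).mpr hcon
        omega
      · rintro ⟨hcF, hpred⟩
        have hm := (hmemF c).mp hcF
        have hTv := Tfill_vals (n := n) (P := P) (Q := Q) (colH n Q c) c
        have hT2 : Tfill n P Q (colH n Q c) c = 2 := by
          rcases hTv with h | h
          · exact absurd ((hentry c hcF).mp h) hpred
          · exact h
        exact ⟨⟨hm.2.2, hm.1, hT2⟩, hm.2.1⟩
    rw [this]
    have hadd := Finset.card_filter_add_card_filter_not
      (s := F) (p := fun x => ((F.filter (fun y => y < x)).card < aof n P Q i))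
    rw [lpos_count] at hadd
    have : F.card = uof n P Q i j := rfl
    omega

lemma scnt_Tfill (hP : IsYoung n P) (j : ℕ) (s : ℕ) (hs : s = 1 ∨ s = 2) :
    scnt n P Q (Tfill n P Q) s j =
      ∑ i ∈ Finset.Icc 1 n, (if s = 1 then min (uof n P Q i j) (aof n P Q i)
        else uof n P Q i j - min (uof n P Q i j) (aof n P Q i)) := by
  unfold scnt
  have hsub : ((Finset.range j).filter (fun c => colH n P c = colH n Q c + 1 ∧
      Tfill n P Q (colH n Q c) c = s)) ⊆ Sing n P Q := by
    intro c hc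
    simp only [Finset.mem_filter, Finset.mem_range] at hc
    simp only [Sing, Finset.mem_filter, Finset.mem_range]
    exact ⟨colH_pos_lt hP (by omega), hc.2.1⟩
  rw [fiber_card _ hsub]
  apply Finset.sum_congr rfl
  intro i hi
  exact scnt_Tfill_fiber hP i j hi s hs

lemma uof_tot (hP : IsYoung n P) (i : ℕ) : uof n P Q i (P 0) = (Bof n P Q i).card := by
  unfold uof
  congr 1
  apply Finset.filter_true_of_mem
  intro c hc
  exact Bof_lt_tot hP hc

end Count

section BackMain

variable {n : ℕ} {P Q : ℕ → ℕ}

lemma scnt_Tfill1 (hP : IsYoung n P) (j : ℕ) :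
    scnt n P Q (Tfill n P Q) 1 j =
      ∑ i ∈ Finset.Icc 1 n, min (uof n P Q i j) (aof n P Q i) := by
  rw [scnt_Tfill hP j 1 (Or.inl rfl)]
  apply Finset.sum_congr rfl
  intro i _
  rw [if_pos rfl]

lemma scnt_Tfill2 (hP : IsYoung n P) (j : ℕ) :
    scnt n P Q (Tfill n P Q) 2 j =
      ∑ i ∈ Finset.Icc 1 n, (uof n P Q i j - min (uof n P Q i j) (aof n P Q i)) := by
  rw [scnt_Tfill hP j 2 (Or.inr rfl)]
  apply Finset.sum_congr rfl
  intro i _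
  rw [if_neg (by omega : ¬ (2 : ℕ) = 1)]

lemma skewSize_decomp (hP : IsYoung n P) (hQ : IsYoung n Q) (hQP : ∀ i, Q i ≤ P i)
    (hth : ThickLE n P Q 2) :
    skewSize n P Q = 2 * dcnt n P Q (P 0) + (Sing n P Q).card := by
  rw [skewSize_eq_sum hP hQ]
  have hpt : ∀ c ∈ Finset.range (P 0), colH n P c - colH n Q c =
      (if colH n P c = colH n Q c + 2 then 2 else 0) +
      (if colH n P c = colH n Q c + 1 then 1 else 0) := by
    intro c _
    have h1 := hth c
    have h2 := colH_mono n hQP c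
    split_ifs <;> omega
  rw [Finset.sum_congr rfl hpt, Finset.sum_add_distrib]
  congr 1
  · have h2 : ∀ c ∈ Finset.range (P 0), (if colH n P c = colH n Q c + 2 then 2 else 0) =
        2 * (if colH n P c = colH n Q c + 2 then 1 else 0) := by
      intro c _
      split_ifs <;> rfl
    rw [Finset.sum_congr rfl h2, ← Finset.mul_sum]
    unfold dcnt
    rw [Finset.card_filter]
  · unfold Sing
    rw [Finset.card_filter]

lemma backward_main (hP : IsYoung n P) (hQ : IsYoung n Q) (hQP : ∀ i, Q i ≤ P i)
    (heven : Even (skewSize n P Q)) (hth : ThickLE n P Q 2)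
    (hbr : ∀ i, 1 ≤ i → i ≤ n → 2 * bridge n P Q i ≤ ∑ j ∈ Finset.Icc 1 n, bridge n P Q j) :
    SkewSemistd P Q (Tfill n P Q) ∧ InAlpha P Q (Tfill n P Q) 1 2 ∧
      cntAll n P Q (Tfill n P Q) 1 = cntAll n P Q (Tfill n P Q) 2 ∧
      Codom n P Q (Tfill n P Q) 1 := by
  have hT := Tfill_semistd hP hQ hQP hth
  have hA : InAlpha P Q (Tfill n P Q) 1 2 := Tfill_alpha
  set m := mhalf n P Q with hm
  have h2m : (Sing n P Q).card = 2 * m := by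
    have hdecomp := skewSize_decomp hP hQ hQP hth
    obtain ⟨r, hr⟩ := heven
    have hmdef : m = (Sing n P Q).card / 2 := rfl
    omega
  have hbm' : ∀ i, 1 ≤ i → i ≤ n → bridge n P Q i ≤ m := by
    intro i h1 h2
    have := hbr i h1 h2
    rw [sum_bridge_eq] at this
    omega
  have hIcc : ∀ g : ℕ → ℕ, ∑ i ∈ Finset.Icc 1 n, g i = ∑ k ∈ Finset.range n, g (n - k) := by
    intro g
    have := sum_Icc_rev g n n le_rfl
    rw [show n - n + 1 = 1 by omega] at this
    exact this
  have hLk : ∀ k, k < n →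
      Lsum n P Q (n - k) = ∑ k' ∈ Finset.range k, bridge n P Q (n - k') := by
    intro k hk
    have h := sum_Icc_rev (bridge n P Q) n k (by omega)
    unfold Lsum
    rw [show n - k + 1 = n - k + 1 from rfl] at h ⊢
    exact h
  have haof : ∀ k, k < n → aof n P Q (n - k) = bridge n P Q (n - k) -
      min (bridge n P Q (n - k)) (m - ∑ k' ∈ Finset.range k, bridge n P Q (n - k')) := by
    intro k hk
    unfold aof zof
    rw [hLk k hk, ← hm]
  have hub : ∀ j k, uof n P Q (n - k) j ≤ bridge n P Q (n - k) := by
    intro j k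
    by_cases hk : k < n
    · rw [bridge_eq_Bof (show 1 ≤ n - k by omega)]
      exact Finset.card_le_card (Finset.filter_subset _ _)
    · have h0 : n - k = 0 := by omega
      rw [h0]
      unfold uof
      rw [Bof_zero hP]
      simp
  have hord : ∀ j k k', k < k' → k' < n → 0 < uof n P Q (n - k') j →
      uof n P Q (n - k) j = bridge n P Q (n - k) := by
    intro j k k' hkk hk'n hu
    have hne : ((Bof n P Q (n - k')).filter (fun c => c < j)).Nonempty :=
      Finset.card_pos.mp hu
    obtain ⟨c', hc'⟩ := hne
    rw [Finset.mem_filter] at hc'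
    have hall : ∀ c ∈ Bof n P Q (n - k), c < j := by
      intro c hc
      have := Bof_ord hP (show n - k' < n - k by omega) hc hc'.1
      omega
    unfold uof
    rw [Finset.filter_true_of_mem hall, bridge_eq_Bof (show 1 ≤ n - k by omega)]
  have hbsum : ∑ k ∈ Finset.range n, bridge n P Q (n - k) = 2 * m := by
    rw [← hIcc, sum_bridge_eq, h2m]
  -- codominance at the level of single columns
  have hscnt : ∀ j, scnt n P Q (Tfill n P Q) 1 j ≤ scnt n P Q (Tfill n P Q) 2 j := by
    intro j
    rw [scnt_Tfill1 hP j, scnt_Tfill2 hP j, hIcc, hIcc]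
    have e1 : ∀ k ∈ Finset.range n,
        min (uof n P Q (n - k) j) (aof n P Q (n - k)) =
        min (uof n P Q (n - k) j) (bridge n P Q (n - k) -
          min (bridge n P Q (n - k)) (m - ∑ k' ∈ Finset.range k, bridge n P Q (n - k'))) := by
      intro k hk
      rw [haof k (Finset.mem_range.mp hk)]
    have e2 : ∀ k ∈ Finset.range n,
        (uof n P Q (n - k) j - min (uof n P Q (n - k) j) (aof n P Q (n - k))) =
        (uof n P Q (n - k) j - (bridge n P Q (n - k) -
          min (bridge n P Q (n - k)) (m - ∑ k' ∈ Finset.range k, bridge n P Q (n - k')))) := by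
      intro k hk
      rw [haof k (Finset.mem_range.mp hk)]
      have := hub j k
      omega
    rw [Finset.sum_congr rfl e1, Finset.sum_congr rfl e2]
    exact abstract_codom m n (fun k => bridge n P Q (n - k)) (fun k => uof n P Q (n - k) j)
      (fun k => hub j k)
      (fun k hk => hbm' (n - k) (by omega) (by omega))
      (by rw [hbsum])
      (fun k k' h1 h2 h3 => hord j k k' h1 h2 h3)
  -- balance of single columns
  have hbal : scnt n P Q (Tfill n P Q) 1 (P 0) = scnt n P Q (Tfill n P Q) 2 (P 0) := by
    rw [scnt_Tfill1 hP, scnt_Tfill2 hP]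
    have huu : ∀ i ∈ Finset.Icc 1 n, uof n P Q i (P 0) = bridge n P Q i := by
      intro i hi
      rw [uof_tot hP, bridge_eq_Bof (Finset.mem_Icc.mp hi).1]
    have e1 : ∀ i ∈ Finset.Icc 1 n,
        min (uof n P Q i (P 0)) (aof n P Q i) = aof n P Q i := by
      intro i hi
      rw [huu i hi]
      unfold aof
      omega
    have e2 : ∀ i ∈ Finset.Icc 1 n,
        (uof n P Q i (P 0) - min (uof n P Q i (P 0)) (aof n P Q i)) = zof n P Q i := by
      intro i hi
      rw [huu i hi]
      unfold aof zof
      omega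
    rw [Finset.sum_congr rfl e1, Finset.sum_congr rfl e2]
    have hzsum : ∑ i ∈ Finset.Icc 1 n, zof n P Q i = m := by
      rw [hIcc]
      have e3 : ∀ k ∈ Finset.range n, zof n P Q (n - k) =
          min (bridge n P Q (n - k)) (m - ∑ k' ∈ Finset.range k, bridge n P Q (n - k')) := by
        intro k hk
        unfold zof
        rw [hLk k (Finset.mem_range.mp hk), ← hm]
      rw [Finset.sum_congr rfl e3, Zlemma, hbsum]
      omega
    have hasum : ∑ i ∈ Finset.Icc 1 n, aof n P Q i = m := by
      have hsum : ∑ i ∈ Finset.Icc 1 n, aof n P Q i + ∑ i ∈ Finset.Icc 1 n, zof n P Q i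
          = ∑ i ∈ Finset.Icc 1 n, bridge n P Q i := by
        rw [← Finset.sum_add_distrib]
        apply Finset.sum_congr rfl
        intro i _
        unfold aof zof
        omega
      rw [sum_bridge_eq, h2m] at hsum
      omega
    rw [hzsum, hasum]
  refine ⟨hT, hA, ?_, ?_⟩
  · rw [cntAll_eq hP, cntAll_eq hP,
      cntCols_decomp hP hQ hQP hth hT hA (Or.inl rfl),
      cntCols_decomp hP hQ hQP hth hT hA (Or.inr rfl), hbal]
  · intro j
    rw [cntCols_decomp hP hQ hQP hth hT hA (Or.inl rfl),
      cntCols_decomp hP hQ hQP hth hT hA (Or.inr rfl)]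
    have := hscnt j
    omega

end BackMain


/-- A skew diagram `P/Q` admits a balanced, `α₁`-codominant, semistandard
`{1,2}`-filling if and only if its number of boxes is even, it has thickness at most
`2`, and no single bridge contains a majority of all bridge boxes. -/
theorem stmt_7 (n : ℕ) (P Q : ℕ → ℕ) (hP : IsYoung n P) (hQ : IsYoung n Q)
    (hQP : ∀ i, Q i ≤ P i) :
    (∃ T : ℕ → ℕ → ℕ, SkewSemistd P Q T ∧ InAlpha P Q T 1 2 ∧
        cntAll n P Q T 1 = cntAll n P Q T 2 ∧ Codom n P Q T 1) ↔
    (Even (skewSize n P Q) ∧ ThickLE n P Q 2 ∧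
      ∀ i, 1 ≤ i → i ≤ n → 2 * bridge n P Q i ≤ ∑ j ∈ Finset.Icc 1 n, bridge n P Q j) := by
  constructor
  · rintro ⟨T, hT, hA, hbal, hcod⟩
    refine ⟨even_of_filling hA hbal, thick_of_filling hP hQ hT hA, ?_⟩
    intro i h1 h2
    exact bridge_bound_of_filling hP hQ hQP hT hA hbal hcod h1 h2
  · rintro ⟨heven, hth, hbr⟩
    obtain ⟨h1, h2, h3, h4⟩ := backward_main hP hQ hQP heven hth hbr
    exact ⟨Tfill n P Q, h1, h2, h3, h4⟩
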